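/- Let λ₁ > λ₂ be two consecutive real numbers, M > 0, and (β_k) a square-summable real sequence with β₁, β₂ ≠ 0 associated to a strictly decreasing sequence (λ_k). Then the function F(ν) = Σ_k β_k²/(λ_k − ν) is continuous and strictly monotone increasing on (λ₂, λ₁), tends to −∞ as ν ↓ λ₂ and to +∞ as ν ↑ λ₁; hence the equation F(ν) = 1/M has exactly one solution ν in the open interval (λ₂, λ₁). Moreover, if the sequence (λ_k with β_k ≠ 0) is finite, there is exactly one solution ν < min{λ_k : β_k ≠ 0}, and no solution ν > max{λ_k : β_k ≠ 0}. -/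

import Mathlib

open Real Filter

section Helpers

open Topology

lemma inv_term_lt {L x y : ℝ} (hxy : x < y) (h : y < L ∨ L < x) :
    1 / (L - x) < 1 / (L - y) := by
  rcases h with h | h
  · exact one_div_lt_one_div_of_lt (by linarith) (by linarith)
  · exact one_div_lt_one_div_of_neg_of_lt (by linarith) (by linarith)

lemma term_mono {c L x y : ℝ} (hc : 0 ≤ c) (hxy : x < y) (h : y < L ∨ L < x) :
    c / (L - x) ≤ c / (L - y) := by
  rw [div_eq_mul_one_div c, div_eq_mul_one_div c]
  exact mul_le_mul_of_nonneg_left (inv_term_lt hxy h).le hc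

lemma term_strict {c L x y : ℝ} (hc : 0 < c) (hxy : x < y) (h : y < L ∨ L < x) :
    c / (L - x) < c / (L - y) := by
  rw [div_eq_mul_one_div c, div_eq_mul_one_div c]
  exact mul_lt_mul_of_pos_left (inv_term_lt hxy h) hc

lemma summableF {lam β : ℕ → ℝ} (hsum : Summable (fun k => (β k) ^ 2))
    (hbot : Tendsto lam atTop atBot) (ν : ℝ) :
    Summable (fun k => (β k) ^ 2 / (lam k - ν)) := by
  apply Summable.of_norm_bounded_eventually hsum
  rw [Nat.cofinite_eq_atTop]
  filter_upwards [hbot.eventually (eventually_le_atBot (ν - 1))] with k hk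
  have h1 : 1 ≤ |lam k - ν| := by
    rw [abs_sub_comm, abs_of_nonneg (by linarith)]; linarith
  rw [Real.norm_eq_abs, abs_div, abs_of_nonneg (sq_nonneg _)]
  exact div_le_self (sq_nonneg _) h1

lemma blowup_top {c : ℝ} (L : ℝ) (hc : 0 < c) :
    Tendsto (fun ν => c / (L - ν)) (𝓝[<] L) atTop := by
  have h : Tendsto (fun ν => L - ν) (𝓝[<] L) (𝓝[>] 0) := by
    rw [tendsto_nhdsWithin_iff]
    refine ⟨tendsto_nhdsWithin_of_tendsto_nhds ?_, ?_⟩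
    · have : Continuous (fun ν : ℝ => L - ν) := by continuity
      simpa using this.tendsto L
    · filter_upwards [self_mem_nhdsWithin] with x hx
      simp only [Set.mem_Iio] at hx; simp only [Set.mem_Ioi]; linarith
  simp only [div_eq_mul_inv]
  exact Tendsto.const_mul_atTop hc (tendsto_inv_nhdsGT_zero.comp h)

lemma blowup_bot {c : ℝ} (L : ℝ) (hc : 0 < c) :
    Tendsto (fun ν => c / (L - ν)) (𝓝[>] L) atBot := by
  have h : Tendsto (fun ν => ν - L) (𝓝[>] L) (𝓝[>] 0) := by
    rw [tendsto_nhdsWithin_iff]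
    refine ⟨tendsto_nhdsWithin_of_tendsto_nhds ?_, ?_⟩
    · have : Continuous (fun ν : ℝ => ν - L) := by continuity
      simpa using this.tendsto L
    · filter_upwards [self_mem_nhdsWithin] with x hx
      simp only [Set.mem_Ioi] at hx ⊢; linarith
  have h2 : Tendsto (fun ν => c / (ν - L)) (𝓝[>] L) atTop := by
    simp only [div_eq_mul_inv]
    exact Tendsto.const_mul_atTop hc (tendsto_inv_nhdsGT_zero.comp h)
  have heq : (fun ν => c / (L - ν)) = fun ν => -(c / (ν - L)) := by
    funext ν; rw [show L - ν = -(ν - L) by ring, div_neg, ← neg_div]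
  rw [heq]
  exact tendsto_neg_atTop_atBot.comp h2

lemma atTop_add_nhds {α : Type*} {f g : α → ℝ} {l : Filter α} {C : ℝ}
    (hf : Tendsto f l atTop) (hg : Tendsto g l (𝓝 C)) :
    Tendsto (fun x => f x + g x) l atTop := by
  simpa [add_comm] using Tendsto.add_atTop hg hf

lemma atBot_add_nhds {α : Type*} {f g : α → ℝ} {l : Filter α} {C : ℝ}
    (hf : Tendsto f l atBot) (hg : Tendsto g l (𝓝 C)) :
    Tendsto (fun x => f x + g x) l atBot := by
  simpa [add_comm] using Tendsto.add_atBot hg hf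

end Helpers

/-- The eigenvalue function `F(ν) = Σ_k β_k²/(λ_k − ν)`. -/
noncomputable def F (lam β : ℕ → ℝ) (ν : ℝ) : ℝ := ∑' k, (β k) ^ 2 / (lam k - ν)

section MainHelpers

open Topology

variable {lam β : ℕ → ℝ}

lemma F_split (hsum : Summable (fun k => (β k) ^ 2)) (hbot : Tendsto lam atTop atBot) :
    F lam β = fun ν => (β 0) ^ 2 / (lam 0 - ν) +
      ((β 1) ^ 2 / (lam 1 - ν) + ∑' k, (β (k + 2)) ^ 2 / (lam (k + 2) - ν)) := by
  funext ν
  have h0 := summableF hsum hbot ν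
  have h1 : Summable (fun k => (β (k + 1)) ^ 2 / (lam (k + 1) - ν)) :=
    (summable_nat_add_iff 1).2 h0
  rw [F, Summable.tsum_eq_zero_add h0, Summable.tsum_eq_zero_add h1]

lemma contG (hanti : StrictAnti lam) (hsum : Summable (fun k => (β k) ^ 2)) :
    ContinuousOn (fun ν => ∑' k, (β (k + 2)) ^ 2 / (lam (k + 2) - ν))
      (Set.Ioi ((lam 2 + lam 1) / 2)) := by
  have h21 : lam 2 < lam 1 := hanti (by norm_num)
  apply continuousOn_tsum (u := fun k => (β (k + 2)) ^ 2 / ((lam 1 - lam 2) / 2))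
  · intro i
    apply ContinuousOn.div continuousOn_const
      ((continuous_const.sub continuous_id).continuousOn)
    intro x hx
    have hle : lam (i + 2) ≤ lam 2 := hanti.antitone (by omega)
    simp only [Set.mem_Ioi] at hx
    have : lam (i + 2) - x < 0 := by linarith
    exact this.ne
  · exact ((summable_nat_add_iff 2).2 hsum).div_const _
  · intro n x hx
    simp only [Set.mem_Ioi] at hx
    have hle : lam (n + 2) ≤ lam 2 := hanti.antitone (by omega)
    rw [Real.norm_eq_abs, abs_div, abs_of_nonneg (sq_nonneg _), abs_sub_comm,
      abs_of_nonneg (by linarith)]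
    exact div_le_div_of_nonneg_left (sq_nonneg _) (by linarith) (by linarith)

end MainHelpers

/-- Interlacing of nonlocal eigenvalues: on the interval between two consecutive
local eigenvalues `λ₁ = lam 0 > λ₂ = lam 1` (with `β₀, β₁ ≠ 0`), the function
`F(ν) = Σ β_k²/(λ_k − ν)` is continuous, strictly increasing, tends to `−∞` at the
left endpoint and `+∞` at the right endpoint, hence `F(ν) = 1/M` has exactly one
solution there.  If only finitely many `β_k` are nonzero, there is exactly one
solution below `min{λ_k : β_k ≠ 0}` and none above `max{λ_k : β_k ≠ 0}`. -/
theorem stmt11 (M : ℝ) (hM : 0 < M)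
    (lam : ℕ → ℝ) (hanti : StrictAnti lam) (hbot : Tendsto lam atTop atBot)
    (β : ℕ → ℝ) (hsum : Summable (fun k => (β k) ^ 2))
    (hβ0 : β 0 ≠ 0) (hβ1 : β 1 ≠ 0) :
    ContinuousOn (F lam β) (Set.Ioo (lam 1) (lam 0)) ∧
    StrictMonoOn (F lam β) (Set.Ioo (lam 1) (lam 0)) ∧
    Tendsto (F lam β) (nhdsWithin (lam 1) (Set.Ioi (lam 1))) atBot ∧
    Tendsto (F lam β) (nhdsWithin (lam 0) (Set.Iio (lam 0))) atTop ∧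
    (∃! ν : ℝ, ν ∈ Set.Ioo (lam 1) (lam 0) ∧ F lam β ν = 1 / M) ∧
    ({k | β k ≠ 0}.Finite →
      (∃! ν : ℝ, ν < sInf (lam '' {k | β k ≠ 0}) ∧ F lam β ν = 1 / M) ∧
      ∀ ν : ℝ, sSup (lam '' {k | β k ≠ 0}) < ν → F lam β ν ≠ 1 / M) := by
  have h01 : lam 1 < lam 0 := hanti (by norm_num)
  have h21 : lam 2 < lam 1 := hanti (by norm_num)
  have hβ0sq : (0:ℝ) < (β 0) ^ 2 := by positivity
  have hβ1sq : (0:ℝ) < (β 1) ^ 2 := by positivity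
  have hMinv : (0:ℝ) < 1 / M := by positivity
  set m : ℝ := (lam 2 + lam 1) / 2 with hm
  have hm1 : m < lam 1 := by rw [hm]; linarith
  -- continuity on Ioo
  have hcont : ContinuousOn (F lam β) (Set.Ioo (lam 1) (lam 0)) := by
    rw [F_split hsum hbot]
    apply ContinuousOn.add
    · apply ContinuousOn.div continuousOn_const
        ((continuous_const.sub continuous_id).continuousOn)
      intro x hx
      have : lam 0 - x > 0 := by linarith [hx.2]
      exact this.ne'
    apply ContinuousOn.add
    · apply ContinuousOn.div continuousOn_const
        ((continuous_const.sub continuous_id).continuousOn)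
      intro x hx
      have : lam 1 - x < 0 := by linarith [hx.1]
      exact this.ne
    · exact (contG hanti hsum).mono (fun x hx => by
        simp only [Set.mem_Ioi]; linarith [hx.1])
  -- strict monotonicity on Ioo
  have hstrict : StrictMonoOn (F lam β) (Set.Ioo (lam 1) (lam 0)) := by
    intro x hx y hy hxy
    unfold F
    apply Summable.tsum_lt_tsum (i := 0) ?_ ?_ (summableF hsum hbot x) (summableF hsum hbot y)
    · intro k
      apply term_mono (sq_nonneg _) hxy
      match k with
      | 0 => exact Or.inl hy.2
      | (n+1) =>
        right
        have : lam (n + 1) ≤ lam 1 := hanti.antitone (by omega)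
        linarith [hx.1]
    · exact term_strict hβ0sq hxy (Or.inl hy.2)
  -- limit at left endpoint
  have hbotlim : Tendsto (F lam β) (nhdsWithin (lam 1) (Set.Ioi (lam 1))) atBot := by
    rw [F_split hsum hbot]
    apply Tendsto.add_atBot (C := (β 0) ^ 2 / (lam 0 - lam 1))
    · have hc : ContinuousAt (fun ν => (β 0) ^ 2 / (lam 0 - ν)) (lam 1) := by
        apply ContinuousAt.div continuousAt_const
          ((continuous_const.sub continuous_id).continuousAt)
        have : lam 0 - lam 1 > 0 := by linarith
        exact this.ne'
      exact hc.tendsto.mono_left nhdsWithin_le_nhds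
    apply atBot_add_nhds (blowup_bot (lam 1) hβ1sq)
    · have hc : ContinuousAt (fun ν => ∑' k, (β (k + 2)) ^ 2 / (lam (k + 2) - ν))
          (lam 1) := (contG hanti hsum).continuousAt (Ioi_mem_nhds hm1)
      exact hc.tendsto.mono_left nhdsWithin_le_nhds
  -- limit at right endpoint
  have htoplim : Tendsto (F lam β) (nhdsWithin (lam 0) (Set.Iio (lam 0))) atTop := by
    rw [F_split hsum hbot]
    apply atTop_add_nhds (blowup_top (lam 0) hβ0sq)
    apply Tendsto.add
    · have hc : ContinuousAt (fun ν => (β 1) ^ 2 / (lam 1 - ν)) (lam 0) := by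
        apply ContinuousAt.div continuousAt_const
          ((continuous_const.sub continuous_id).continuousAt)
        have : lam 1 - lam 0 < 0 := by linarith
        exact this.ne
      exact hc.tendsto.mono_left nhdsWithin_le_nhds
    · have hc : ContinuousAt (fun ν => ∑' k, (β (k + 2)) ^ 2 / (lam (k + 2) - ν))
          (lam 0) := (contG hanti hsum).continuousAt (Ioi_mem_nhds (by linarith))
      exact hc.tendsto.mono_left nhdsWithin_le_nhds
  -- unique solution in Ioo
  have huniq : ∃! ν : ℝ, ν ∈ Set.Ioo (lam 1) (lam 0) ∧ F lam β ν = 1 / M := by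
    have e1 := hbotlim.eventually (eventually_lt_atBot (1 / M))
    have e2 : ∀ᶠ ν in nhdsWithin (lam 1) (Set.Ioi (lam 1)),
        ν ∈ Set.Ioo (lam 1) (lam 0) := by
      filter_upwards [self_mem_nhdsWithin,
        mem_nhdsWithin_of_mem_nhds (Iio_mem_nhds h01)] with ν hν1 hν2
      exact ⟨hν1, hν2⟩
    obtain ⟨a, ha1, ha2⟩ := (e1.and e2).exists
    have e3 := htoplim.eventually (eventually_gt_atTop (1 / M))
    have e4 : ∀ᶠ ν in nhdsWithin (lam 0) (Set.Iio (lam 0)),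
        ν ∈ Set.Ioo (lam 1) (lam 0) := by
      filter_upwards [self_mem_nhdsWithin,
        mem_nhdsWithin_of_mem_nhds (Ioi_mem_nhds h01)] with ν hν1 hν2
      exact ⟨hν2, hν1⟩
    obtain ⟨b, hb1, hb2⟩ := (e3.and e4).exists
    have hab : a < b := by
      by_contra hcon
      push_neg at hcon
      have : F lam β b ≤ F lam β a := hstrict.monotoneOn hb2 ha2 hcon
      linarith
    have hsub : Set.Icc a b ⊆ Set.Ioo (lam 1) (lam 0) := fun x hx =>
      ⟨lt_of_lt_of_le ha2.1 hx.1, lt_of_le_of_lt hx.2 hb2.2⟩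
    obtain ⟨ν, hν, hFν⟩ := intermediate_value_Icc hab.le (hcont.mono hsub)
      ⟨ha1.le, hb1.le⟩
    refine ⟨ν, ⟨hsub hν, hFν⟩, ?_⟩
    rintro ν' ⟨hν'I, hF'⟩
    exact hstrict.injOn hν'I (hsub hν) (by rw [hF', hFν])
  refine ⟨hcont, hstrict, hbotlim, htoplim, huniq, ?_⟩
  -- finite case
  intro hfin
  set S : Set ℕ := {k | β k ≠ 0} with hS
  have h0S : (0:ℕ) ∈ S := hβ0
  have h1S : (1:ℕ) ∈ S := hβ1
  have himg : (lam '' S).Finite := hfin.image _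
  have hne : (lam '' S).Nonempty := ⟨lam 0, 0, h0S, rfl⟩
  set m0 : ℝ := sInf (lam '' S) with hm0
  set Mx : ℝ := sSup (lam '' S) with hMx
  have hlow : ∀ k ∈ S, m0 ≤ lam k := fun k hk =>
    csInf_le himg.bddBelow ⟨k, hk, rfl⟩
  have hupp : ∀ k ∈ S, lam k ≤ Mx := fun k hk =>
    le_csSup himg.bddAbove ⟨k, hk, rfl⟩
  obtain ⟨k0, hk0S, hk0⟩ := hne.csInf_mem himg
  set T : Finset ℕ := hfin.toFinset with hT
  have hFsum : ∀ ν, F lam β ν = ∑ k ∈ T, (β k) ^ 2 / (lam k - ν) := by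
    intro ν
    apply tsum_eq_sum
    intro b hb
    rw [hT, Set.Finite.mem_toFinset] at hb
    simp only [hS, Set.mem_setOf_eq, not_not] at hb
    simp [hb]
  have hF : F lam β = fun ν => ∑ k ∈ T, (β k) ^ 2 / (lam k - ν) := funext hFsum
  have hmemT : ∀ k, k ∈ T ↔ k ∈ S := by
    intro k; rw [hT, Set.Finite.mem_toFinset]
  constructor
  · -- unique solution below m0
    have hcont2 : ContinuousOn (F lam β) (Set.Iio m0) := by
      rw [hF]
      apply continuousOn_finset_sum
      intro k hk
      apply ContinuousOn.div continuousOn_const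
        ((continuous_const.sub continuous_id).continuousOn)
      intro x hx
      simp only [Set.mem_Iio] at hx
      have : m0 ≤ lam k := hlow k ((hmemT k).1 hk)
      have : lam k - x > 0 := by linarith
      exact this.ne'
    have hstrict2 : StrictMonoOn (F lam β) (Set.Iio m0) := by
      intro x hx y hy hxy
      simp only [Set.mem_Iio] at hx hy
      unfold F
      apply Summable.tsum_lt_tsum (i := 0) ?_ ?_ (summableF hsum hbot x) (summableF hsum hbot y)
      · intro k
        by_cases hk : β k = 0
        · simp [hk]
        · exact term_mono (sq_nonneg _) hxy
            (Or.inl (lt_of_lt_of_le hy (hlow k hk)))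
      · exact term_strict hβ0sq hxy (Or.inl (lt_of_lt_of_le hy (hlow 0 h0S)))
    have hzero : Tendsto (F lam β) atBot (nhds 0) := by
      rw [hF]
      have : Tendsto (fun ν : ℝ => ∑ k ∈ T, (β k) ^ 2 / (lam k - ν)) atBot
          (nhds (∑ k ∈ T, (0:ℝ))) := by
        apply tendsto_finset_sum
        intro k _
        apply Tendsto.div_atTop tendsto_const_nhds
        have h1 : Tendsto (fun ν : ℝ => -ν) atBot atTop := tendsto_neg_atBot_atTop
        have := tendsto_atTop_add_const_left atBot (lam k) h1
        exact this.congr (fun ν => by ring)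
      simpa using this
    have hblow : Tendsto (F lam β) (nhdsWithin m0 (Set.Iio m0)) atTop := by
      rw [hF]
      have hk0T : k0 ∈ T := (hmemT k0).2 hk0S
      have hsplit : (fun ν : ℝ => ∑ k ∈ T, (β k) ^ 2 / (lam k - ν)) =
          fun ν => (β k0) ^ 2 / (lam k0 - ν) +
            ∑ k ∈ T.erase k0, (β k) ^ 2 / (lam k - ν) := by
        funext ν
        exact (Finset.add_sum_erase T (fun k => (β k) ^ 2 / (lam k - ν)) hk0T).symm
      rw [hsplit]
      apply atTop_add_nhds
      · rw [hk0]
        have hne0 : β k0 ≠ 0 := hk0S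
        exact blowup_top m0 (by positivity)
      · have hc : Tendsto (fun ν => ∑ k ∈ T.erase k0, (β k) ^ 2 / (lam k - ν))
            (nhds m0) (nhds (∑ k ∈ T.erase k0, (β k) ^ 2 / (lam k - m0))) := by
          apply tendsto_finset_sum
          intro k hk
          have hca : ContinuousAt (fun ν => (β k) ^ 2 / (lam k - ν)) m0 := by
            apply ContinuousAt.div continuousAt_const
              ((continuous_const.sub continuous_id).continuousAt)
            have hkT := Finset.mem_of_mem_erase hk
            have hkne : k ≠ k0 := Finset.ne_of_mem_erase hk
            have h1 : m0 ≤ lam k := hlow k ((hmemT k).1 hkT)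
            have h2 : lam k ≠ m0 := by
              intro heq
              exact hkne (hanti.injective (heq.trans hk0.symm))
            intro hzero
            exact h2 (by simpa using sub_eq_zero.1 hzero)
          exact hca.tendsto
        exact hc.mono_left nhdsWithin_le_nhds
    -- existence via IVT
    have e1 := hzero.eventually_lt_const hMinv
    have e2 : ∀ᶠ ν in atBot, ν < m0 := eventually_lt_atBot m0
    obtain ⟨a, ha1, ha2⟩ := (e1.and e2).exists
    have e3 := hblow.eventually (eventually_gt_atTop (1 / M))
    obtain ⟨b, hb1, hb2'⟩ := (e3.and self_mem_nhdsWithin).exists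
    have hb2 : b < m0 := hb2'
    have hab : a < b := by
      by_contra hcon
      push_neg at hcon
      have : F lam β b ≤ F lam β a := hstrict2.monotoneOn hb2 ha2 hcon
      linarith
    have hsub : Set.Icc a b ⊆ Set.Iio m0 := fun x hx =>
      lt_of_le_of_lt hx.2 hb2
    obtain ⟨ν, hν, hFν⟩ := intermediate_value_Icc hab.le (hcont2.mono hsub)
      ⟨ha1.le, hb1.le⟩
    refine ⟨ν, ⟨hsub hν, hFν⟩, ?_⟩
    rintro ν' ⟨hν'lt, hF'⟩
    exact hstrict2.injOn (Set.mem_Iio.2 hν'lt) (hsub hν) (by rw [hF', hFν])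
  · -- no solution above Mx
    intro ν hν heq
    have hle : F lam β ν ≤ 0 := by
      unfold F
      apply tsum_nonpos
      intro k
      by_cases hk : β k = 0
      · simp [hk]
      · apply div_nonpos_of_nonneg_of_nonpos (sq_nonneg _)
        have : lam k ≤ Mx := hupp k hk
        linarith
    rw [heq] at hle
    linarith
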